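/- Type (a) and type (b) molecules form a bounded subset of H¹_r(X): for every α > 0 there is a constant C, depending only on α and the doubling constant C_D, such that every type (a) molecule and every type (b) molecule with parameter α belongs to H¹_r(X) with H¹_r(X)-norm at most C. -/

import Mathlib

open MeasureTheory Metric Filter Set

noncomputable section

/-- The parabolic quasi-distance on `ℝ × E`. -/
def pdist {E : Type*} [MetricSpace E] (p q : ℝ × E) : ℝ :=
  max (Real.sqrt |p.1 - q.1|) (dist p.2 q.2)

/-- The open parabolic ball in `N = ℝ × E`. -/
def pball {E : Type*} [MetricSpace E] (c : ℝ × E) (r : ℝ) : Set (ℝ × E) :=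
  {p | pdist p c < r}

/-- The upper half space `X = (0,∞) × E` of `N = ℝ × E`. -/
def Xset (E : Type*) : Set (ℝ × E) := {p | 0 < p.1}

/-- The product measure `ν = Lebesgue ⊗ μ` on `N = ℝ × E`. -/
def pmeas {E : Type*} [MeasurableSpace E] (μ : Measure E) : Measure (ℝ × E) :=
  (volume : Measure ℝ).prod μ

/-- A `(1,2)`-atom on `N`: supported in a parabolic ball `Q`, mean value zero, and
`‖a‖_{L²(ν)} ≤ ν(Q)^{-1/2}`. -/
def IsAtom12 {E : Type*} [MetricSpace E] [MeasurableSpace E]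
    (μ : Measure E) (a : ℝ × E → ℝ) : Prop :=
  ∃ (c : ℝ × E) (r : ℝ), 0 < r ∧ Function.support a ⊆ pball c r ∧
    Integrable a (pmeas μ) ∧ (∫ p, a p ∂(pmeas μ)) = 0 ∧
    eLpNorm a 2 (pmeas μ) ≤ (pmeas μ (pball c r)) ^ (-(1:ℝ)/2)

/-- `f = Σ λ_i a_i` with convergence in `L¹(ρ)`. -/
def HasL1Decomp {E : Type*} [MeasurableSpace E] (ρ : Measure (ℝ × E))
    (f : ℝ × E → ℝ) (lam : ℕ → ℝ) (a : ℕ → ℝ × E → ℝ) : Prop :=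
  Summable (fun i => |lam i|) ∧
  Tendsto (fun k => eLpNorm (fun p => f p - ∑ i ∈ Finset.range k, lam i * a i p) 1 ρ)
    atTop (nhds 0)

/-- Membership in the atomic Hardy space `H¹(N)`. -/
def MemH1 {E : Type*} [MetricSpace E] [MeasurableSpace E]
    (μ : Measure E) (f : ℝ × E → ℝ) : Prop :=
  Integrable f (pmeas μ) ∧
  ∃ (lam : ℕ → ℝ) (a : ℕ → ℝ × E → ℝ), (∀ i, IsAtom12 μ (a i)) ∧
    HasL1Decomp (pmeas μ) f lam a

/-- The `H¹(N)` norm: infimum of `Σ |λ_i|` over all atomic decompositions. -/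
def H1norm {E : Type*} [MetricSpace E] [MeasurableSpace E]
    (μ : Measure E) (f : ℝ × E → ℝ) : ℝ :=
  sInf {c | ∃ (lam : ℕ → ℝ) (a : ℕ → ℝ × E → ℝ), (∀ i, IsAtom12 μ (a i)) ∧
    HasL1Decomp (pmeas μ) f lam a ∧ c = ∑' i, |lam i|}

/-- Membership in `H¹_r(X)`: `f ∈ L¹(X,ν)` is the restriction to `X` of some `F ∈ H¹(N)`. -/
def MemH1r {E : Type*} [MetricSpace E] [MeasurableSpace E]
    (μ : Measure E) (f : ℝ × E → ℝ) : Prop :=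
  IntegrableOn f (Xset E) (pmeas μ) ∧
  ∃ F : ℝ × E → ℝ, MemH1 μ F ∧ F =ᵐ[(pmeas μ).restrict (Xset E)] f

/-- The quotient norm on `H¹_r(X)`. -/
def H1rnorm {E : Type*} [MetricSpace E] [MeasurableSpace E]
    (μ : Measure E) (f : ℝ × E → ℝ) : ℝ :=
  sInf {c | ∃ F : ℝ × E → ℝ, MemH1 μ F ∧ F =ᵐ[(pmeas μ).restrict (Xset E)] f ∧
    c = H1norm μ F}

/-- Membership in `H¹_z(X)`: the extension of `f` by zero belongs to `H¹(N)`. -/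
def MemH1z {E : Type*} [MetricSpace E] [MeasurableSpace E]
    (μ : Measure E) (f : ℝ × E → ℝ) : Prop :=
  IntegrableOn f (Xset E) (pmeas μ) ∧ MemH1 μ ((Xset E).indicator f)

/-- The `H¹_z(X)` norm: the `H¹(N)` norm of the zero extension. -/
def H1znorm {E : Type*} [MetricSpace E] [MeasurableSpace E]
    (μ : Measure E) (f : ℝ × E → ℝ) : ℝ :=
  H1norm μ ((Xset E).indicator f)

/-- `μ` is doubling with constant `C_D`, with all balls of positive finite measure. -/
def DoublingWith {E : Type*} [MetricSpace E] [MeasurableSpace E]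
    (μ : Measure E) (C_D : ℝ) : Prop :=
  (∀ (x : E) (r : ℝ), 0 < r → 0 < μ (ball x r) ∧ μ (ball x r) < ⊤) ∧
  (∀ (x : E) (r : ℝ), 0 < r → μ (ball x (2 * r)) ≤ ENNReal.ofReal C_D * μ (ball x r))

/-- The annular regions `B_j(Q)` attached to a parabolic ball `Q = pball c r`:
`B_1(Q) = 4Q ∩ X` and `B_j(Q) = (2^{j+1}Q ∖ 2^jQ) ∩ X` for `j ≥ 2`. -/
def molBall {E : Type*} [MetricSpace E] (c : ℝ × E) (r : ℝ) (j : ℕ) : Set (ℝ × E) :=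
  if j = 1 then pball c (4 * r) ∩ Xset E
  else (pball c (2 ^ (j + 1) * r) \ pball c (2 ^ j * r)) ∩ Xset E

/-- The size estimates with parameter `α` for a function `m` on `X` associated to `Q`:
`‖m‖_{L²(B_j(Q))} ≤ 2^{−jα} ν(2^{j+1}Q ∩ X)^{−1/2}` for all `j ≥ 1`. -/
def MolSize {E : Type*} [MetricSpace E] [MeasurableSpace E]
    (μ : Measure E) (α : ℝ) (c : ℝ × E) (r : ℝ) (m : ℝ × E → ℝ) : Prop :=
  ∀ j : ℕ, 1 ≤ j →
    eLpNorm m 2 ((pmeas μ).restrict (molBall c r j)) ≤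
      ENNReal.ofReal ((2:ℝ) ^ (-(j:ℝ) * α)) *
        (pmeas μ (pball c (2 ^ (j + 1) * r) ∩ Xset E)) ^ (-(1:ℝ)/2)

/-- A type (a) molecule with parameter `α`: associated to a ball `Q ⊆ X` with `4Q ⊆ X`,
satisfying the size estimates and the cancellation `∫_X m dν = 0`. -/
def IsTypeAMolecule {E : Type*} [MetricSpace E] [MeasurableSpace E]
    (μ : Measure E) (α : ℝ) (c : ℝ × E) (r : ℝ) (m : ℝ × E → ℝ) : Prop :=
  0 < r ∧ pball c r ⊆ Xset E ∧ pball c (4 * r) ⊆ Xset E ∧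
  IntegrableOn m (Xset E) (pmeas μ) ∧
  (∫ p in Xset E, m p ∂(pmeas μ)) = 0 ∧
  MolSize μ α c r m

/-- A type (b) molecule with parameter `α`: associated to a ball `Q ⊆ X` with `2Q ⊆ X` and
`4Q ⊄ X`, satisfying the size estimates but no cancellation. -/
def IsTypeBMolecule {E : Type*} [MetricSpace E] [MeasurableSpace E]
    (μ : Measure E) (α : ℝ) (c : ℝ × E) (r : ℝ) (m : ℝ × E → ℝ) : Prop :=
  0 < r ∧ pball c r ⊆ Xset E ∧ pball c (2 * r) ⊆ Xset E ∧ ¬ (pball c (4 * r) ⊆ Xset E) ∧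
  IntegrableOn m (Xset E) (pmeas μ) ∧
  MolSize μ α c r m


section MoleculeAux
open scoped ENNReal NNReal
set_option linter.unusedSectionVars false
set_option linter.unusedVariables false
set_option linter.unusedTactic false










section Geom
variable {E : Type} [MetricSpace E] [MeasurableSpace E] [BorelSpace E] {μ : Measure E}
  {c : ℝ × E} {r : ℝ}

lemma mem_pball (hr : 0 < r) {p : ℝ × E} :
    p ∈ pball c r ↔ (c.1 - r^2 < p.1 ∧ p.1 < c.1 + r^2) ∧ p.2 ∈ ball c.2 r := by
  simp only [pball, pdist, mem_setOf_eq, max_lt_iff, Real.sqrt_lt' hr, abs_lt, mem_ball]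
  constructor
  · rintro ⟨⟨h1, h2⟩, h3⟩; exact ⟨⟨by linarith, by linarith⟩, h3⟩
  · rintro ⟨⟨h1, h2⟩, h3⟩; exact ⟨⟨by linarith, by linarith⟩, h3⟩

lemma pball_eq (hr : 0 < r) :
    pball c r = Ioo (c.1 - r^2) (c.1 + r^2) ×ˢ ball c.2 r := by
  ext p; rw [mem_pball hr]; simp [Set.mem_prod, mem_Ioo, and_assoc]

lemma pball_mono {r₁ r₂ : ℝ} (h : r₁ ≤ r₂) : pball c r₁ ⊆ pball c r₂ :=
  fun p hp => lt_of_lt_of_le hp h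

lemma measurableSet_pball (hr : 0 < r) : MeasurableSet (pball c r) := by
  rw [pball_eq hr]; exact measurableSet_Ioo.prod measurableSet_ball

lemma Xset_eq : Xset E = Ioi (0:ℝ) ×ˢ (univ : Set E) := by
  ext p; simp [Xset]

lemma measurableSet_Xset : MeasurableSet (Xset E) := by
  rw [Xset_eq]; exact measurableSet_Ioi.prod MeasurableSet.univ

lemma pmeas_pball [SFinite μ] (hr : 0 < r) :
    pmeas μ (pball c r) = ENNReal.ofReal (2*r^2) * μ (ball c.2 r) := by
  rw [pball_eq hr, pmeas, Measure.prod_prod, Real.volume_Ioo]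
  ring_nf

lemma pball_inter_Xset (hr : 0 < r) :
    pball c r ∩ Xset E = (Ioo (c.1 - r^2) (c.1 + r^2) ∩ Ioi 0) ×ˢ ball c.2 r := by
  rw [pball_eq hr, Xset_eq, Set.prod_inter_prod, Set.inter_univ]

lemma pmeas_pball_inter_X_ge [SFinite μ] (hr : 0 < r) (hc : 0 < c.1) :
    ENNReal.ofReal (r^2) * μ (ball c.2 r) ≤ pmeas μ (pball c r ∩ Xset E) := by
  rw [pball_inter_Xset hr, pmeas, Measure.prod_prod]
  have h1 : Ioo (max (c.1 - r^2) 0) (c.1 + r^2) = Ioo (c.1 - r^2) (c.1 + r^2) ∩ Ioi 0 := by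
    ext t; simp only [mem_Ioo, mem_inter_iff, mem_Ioi, max_lt_iff]; tauto
  rw [← h1, Real.volume_Ioo]
  gcongr
  rcases le_or_gt 0 (c.1 - r^2) with h | h
  · rw [max_eq_left h]; nlinarith
  · rw [max_eq_right h.le]; nlinarith

lemma center_time_ge (hr : 0 < r) (hQX : pball c r ⊆ Xset E) : r^2 ≤ c.1 := by
  have hc : 0 < c.1 := by
    have : c ∈ pball c r := by
      rw [mem_pball hr]; refine ⟨⟨by nlinarith, by nlinarith⟩, mem_ball_self hr⟩
    exact hQX this
  by_contra h
  push_neg at h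
  have hmem : ((c.1 - r^2)/2, c.2) ∈ pball c r := by
    rw [mem_pball hr]
    exact ⟨⟨by nlinarith, by nlinarith⟩, mem_ball_self hr⟩
  have := hQX hmem
  simp only [Xset, mem_setOf_eq] at this
  nlinarith

end Geom



def Qb {E : Type*} [MetricSpace E] (c : ℝ × E) (r : ℝ) (j : ℕ) : Set (ℝ × E) :=
  pball c (2^(j+1) * r)

def Bh {E : Type*} [MetricSpace E] (c : ℝ × E) (r : ℝ) (j : ℕ) : Set (ℝ × E) :=
  Qb c r j ∩ Xset E

section Doub
variable {E : Type} [MetricSpace E] [MeasurableSpace E] [BorelSpace E] {μ : Measure E}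
  {C_D : ℝ} {c : ℝ × E} {r : ℝ}

lemma DoublingWith.sigmaFinite (hd : DoublingWith μ C_D) (y : E) : SigmaFinite μ := by
  apply Measure.sigmaFinite_of_countable (S := Set.range (fun n : ℕ => ball y (n+1)))
    (countable_range _)
  · rintro s ⟨n, rfl⟩
    exact (hd.1 y (n+1) (by positivity)).2
  · rw [Set.sUnion_range]
    ext x
    simp only [mem_iUnion, mem_univ, iff_true, mem_ball]
    obtain ⟨n, hn⟩ := exists_nat_gt (dist x y)
    exact ⟨n, by push_cast; linarith⟩

lemma pmeas_pball_doubling (hd : DoublingWith μ C_D) (hr : 0 < r) :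
    pmeas μ (pball c (2*r)) ≤ ENNReal.ofReal (4*C_D) * pmeas μ (pball c r) := by
  haveI := hd.sigmaFinite c.2
  have h1 : ENNReal.ofReal (2*(2*r)^2) = ENNReal.ofReal 4 * ENNReal.ofReal (2*r^2) := by
    rw [← ENNReal.ofReal_mul (by norm_num : (0:ℝ) ≤ 4)]; congr 1; ring
  rw [pmeas_pball (by positivity : (0:ℝ) < 2*r), pmeas_pball hr, h1]
  calc ENNReal.ofReal 4 * ENNReal.ofReal (2*r^2) * μ (ball c.2 (2*r))
      ≤ ENNReal.ofReal 4 * ENNReal.ofReal (2*r^2) * (ENNReal.ofReal C_D * μ (ball c.2 r)) := by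
        gcongr; exact hd.2 c.2 r hr
    _ = (ENNReal.ofReal 4 * ENNReal.ofReal C_D) * (ENNReal.ofReal (2*r^2) * μ (ball c.2 r)) := by
        ring
    _ = ENNReal.ofReal (4*C_D) * (ENNReal.ofReal (2*r^2) * μ (ball c.2 r)) := by
        rw [← ENNReal.ofReal_mul (by norm_num : (0:ℝ) ≤ 4)]

variable (hd : DoublingWith μ C_D) (hr : 0 < r) (hQX : pball c r ⊆ Xset E)
include hr

lemma Rj_pos (j : ℕ) : (0:ℝ) < 2^(j+1) * r := by positivity

lemma measurableSet_Qb (j : ℕ) : MeasurableSet (Qb c r j) :=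
  measurableSet_pball (Rj_pos hr j)

lemma measurableSet_Bh (j : ℕ) : MeasurableSet (Bh c r j) :=
  (measurableSet_Qb hr j).inter measurableSet_Xset

lemma Qb_mono {i j : ℕ} (h : i ≤ j) : Qb c r i ⊆ Qb c r j := by
  apply pball_mono
  have h2 : (2:ℝ)^(i+1) ≤ 2^(j+1) := pow_le_pow_right₀ (by norm_num) (by omega)
  exact mul_le_mul_of_nonneg_right h2 hr.le

lemma Bh_mono {i j : ℕ} (h : i ≤ j) : Bh c r i ⊆ Bh c r j :=
  inter_subset_inter_left _ (Qb_mono hr h)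

omit hr in
lemma Bh_subset_Qb (j : ℕ) : Bh c r j ⊆ Qb c r j := inter_subset_left

omit hr in
lemma Bh_subset_X (j : ℕ) : Bh c r j ⊆ Xset E := inter_subset_right

include hd in
lemma Qb_lt_top (j : ℕ) : pmeas μ (Qb c r j) < ⊤ := by
  haveI := hd.sigmaFinite c.2
  rw [Qb, pmeas_pball (Rj_pos hr j)]
  exact ENNReal.mul_lt_top ENNReal.ofReal_lt_top (hd.1 c.2 _ (Rj_pos hr j)).2

include hd hQX in
lemma Bh_pos (j : ℕ) : 0 < pmeas μ (Bh c r j) := by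
  haveI := hd.sigmaFinite c.2
  have hc1 : 0 < c.1 := lt_of_lt_of_le (by positivity) (center_time_ge hr hQX)
  refine lt_of_lt_of_le ?_ (pmeas_pball_inter_X_ge (Rj_pos hr j) hc1)
  exact ENNReal.mul_pos
    (ENNReal.ofReal_pos.2 (pow_pos (Rj_pos hr j) 2)).ne' (hd.1 c.2 _ (Rj_pos hr j)).1.ne'

include hd in
lemma Bh_lt_top (j : ℕ) : pmeas μ (Bh c r j) < ⊤ :=
  lt_of_le_of_lt (measure_mono (Bh_subset_Qb j)) (Qb_lt_top hd hr j)

include hd hQX in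
lemma Qb_le_two_Bh (j : ℕ) : pmeas μ (Qb c r j) ≤ 2 * pmeas μ (Bh c r j) := by
  haveI := hd.sigmaFinite c.2
  have hc1 : 0 < c.1 := lt_of_lt_of_le (by positivity) (center_time_ge hr hQX)
  calc pmeas μ (Qb c r j) = ENNReal.ofReal (2*(2^(j+1)*r)^2) * μ (ball c.2 (2^(j+1)*r)) :=
        pmeas_pball (Rj_pos hr j)
    _ = 2 * (ENNReal.ofReal ((2^(j+1)*r)^2) * μ (ball c.2 (2^(j+1)*r))) := by
        rw [ENNReal.ofReal_mul (by norm_num), mul_assoc]; norm_num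
    _ ≤ 2 * pmeas μ (Bh c r j) := by
        gcongr
        exact pmeas_pball_inter_X_ge (Rj_pos hr j) hc1

include hd in
lemma Qb_succ_le (j : ℕ) :
    pmeas μ (Qb c r (j+1)) ≤ ENNReal.ofReal (4*C_D) * pmeas μ (Qb c r j) := by
  have hset : Qb c r (j+1) = pball c (2*(2^(j+1)*r)) := by
    rw [Qb]; congr 1; ring
  rw [hset]
  exact pmeas_pball_doubling hd (Rj_pos hr j)

include hd hQX in
lemma Qb_succ_le_Bh (j : ℕ) :
    pmeas μ (Qb c r (j+1)) ≤ ENNReal.ofReal (8*C_D) * pmeas μ (Bh c r j) := by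
  rcases le_or_gt C_D 0 with h | h
  · have := Qb_succ_le hd hr (c := c) j
    rw [ENNReal.ofReal_eq_zero.2 (by nlinarith)] at this
    simpa [ENNReal.ofReal_eq_zero.2 (by nlinarith : 8*C_D ≤ 0)] using this
  calc pmeas μ (Qb c r (j+1)) ≤ ENNReal.ofReal (4*C_D) * pmeas μ (Qb c r j) :=
        Qb_succ_le hd hr j
    _ ≤ ENNReal.ofReal (4*C_D) * (2 * pmeas μ (Bh c r j)) := by
        gcongr; exact Qb_le_two_Bh hd hr hQX j
    _ = ENNReal.ofReal (8*C_D) * pmeas μ (Bh c r j) := by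
        rw [← mul_assoc]
        congr 1
        rw [show (8*C_D : ℝ) = (4*C_D)*2 by ring, ENNReal.ofReal_mul (by nlinarith : (0:ℝ) ≤ 4*C_D),
          ENNReal.ofReal_ofNat]

omit hr in
lemma rpow_neg_half_le {a b : ENNReal} {K : ℝ} (hK : 0 < K) (h : b ≤ ENNReal.ofReal K * a)
    (ha : a ≠ 0) (hatop : a ≠ ⊤) :
    a ^ (-(1:ℝ)/2) ≤ ENNReal.ofReal (Real.sqrt K) * b ^ (-(1:ℝ)/2) := by
  have hKne : ENNReal.ofReal (Real.sqrt K) ≠ 0 := by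
    simp [ENNReal.ofReal_eq_zero, not_le, Real.sqrt_pos.2 hK]
  have hKtop : ENNReal.ofReal (Real.sqrt K) ≠ ⊤ := ENNReal.ofReal_ne_top
  have hb2 : b ^ ((1:ℝ)/2) ≤ ENNReal.ofReal (Real.sqrt K) * a ^ ((1:ℝ)/2) := by
    calc b ^ ((1:ℝ)/2) ≤ (ENNReal.ofReal K * a) ^ ((1:ℝ)/2) :=
          ENNReal.rpow_le_rpow h (by norm_num)
      _ = (ENNReal.ofReal K) ^ ((1:ℝ)/2) * a ^ ((1:ℝ)/2) :=
          ENNReal.mul_rpow_of_nonneg _ _ (by norm_num)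
      _ = ENNReal.ofReal (Real.sqrt K) * a ^ ((1:ℝ)/2) := by
          rw [ENNReal.ofReal_rpow_of_nonneg hK.le (by norm_num), Real.sqrt_eq_rpow]
  have hneg : (-(1:ℝ)/2) = -((1:ℝ)/2) := by norm_num
  rw [hneg, ENNReal.rpow_neg, ENNReal.rpow_neg]
  have step := ENNReal.inv_le_inv' hb2
  rw [ENNReal.mul_inv (Or.inl hKne) (Or.inl hKtop)] at step
  calc (a ^ ((1:ℝ)/2))⁻¹
      = ENNReal.ofReal (Real.sqrt K) * ((ENNReal.ofReal (Real.sqrt K))⁻¹ * (a ^ ((1:ℝ)/2))⁻¹) := by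
        rw [← mul_assoc, ENNReal.mul_inv_cancel hKne hKtop, one_mul]
    _ ≤ ENNReal.ofReal (Real.sqrt K) * (b ^ ((1:ℝ)/2))⁻¹ := by gcongr

end Doub



section MolSets
variable {E : Type} [MetricSpace E] [MeasurableSpace E] [BorelSpace E] {μ : Measure E}
  {c : ℝ × E} {r : ℝ} (hr : 0 < r)

lemma molBall_one : molBall c r 1 = Bh c r 1 := by
  rw [molBall, if_pos rfl, Bh, Qb]
  norm_num

lemma molBall_succ (j : ℕ) (hj : 1 ≤ j) :
    molBall c r (j+1) = (Qb c r (j+1) \ Qb c r j) ∩ Xset E := by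
  rw [molBall, if_neg (by omega)]
  rfl

lemma molBall_subset_Bh (j : ℕ) (hj : 1 ≤ j) : molBall c r j ⊆ Bh c r j := by
  rcases Nat.exists_eq_add_of_le hj with ⟨i, rfl⟩
  rcases Nat.eq_zero_or_pos i with rfl | hi
  · rw [molBall_one]
  · rw [show 1 + i = (i - 1 + 1) + 1 by omega, molBall_succ _ (by omega)]
    rw [show i - 1 + 1 + 1 = 1 + i by omega]
    exact inter_subset_inter_left _ diff_subset

lemma molBall_subset_X (j : ℕ) : molBall c r j ⊆ Xset E := by
  rw [molBall]
  split <;> exact inter_subset_right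

include hr in
lemma measurableSet_molBall (j : ℕ) : MeasurableSet (molBall c r j) := by
  rw [molBall]
  split
  · exact (measurableSet_pball (by positivity)).inter measurableSet_Xset
  · exact ((measurableSet_pball (by positivity)).diff
      (measurableSet_pball (by positivity))).inter measurableSet_Xset

include hr in
lemma Bh_succ_eq (j : ℕ) (hj : 1 ≤ j) :
    Bh c r (j+1) = Bh c r j ∪ molBall c r (j+1) := by
  rw [molBall_succ j hj, Bh, Bh]
  ext p
  simp only [mem_union, mem_inter_iff, mem_diff]
  constructor
  · rintro ⟨hq, hx⟩
    by_cases h : p ∈ Qb c r j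
    · exact Or.inl ⟨h, hx⟩
    · exact Or.inr ⟨⟨hq, h⟩, hx⟩
  · rintro (⟨hq, hx⟩ | ⟨⟨hq, _⟩, hx⟩)
    · exact ⟨Qb_mono hr (by omega) hq, hx⟩
    · exact ⟨hq, hx⟩

lemma disjoint_Bh_molBall (j : ℕ) (hj : 1 ≤ j) :
    Disjoint (Bh c r j) (molBall c r (j+1)) := by
  rw [molBall_succ j hj, Set.disjoint_left]
  rintro p ⟨hq, _⟩ ⟨⟨_, hq'⟩, _⟩
  exact hq' hq

include hr in
lemma X_diff_eq (j : ℕ) (hj : 1 ≤ j) :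
    Xset E \ Qb c r j = molBall c r (j+1) ∪ (Xset E \ Qb c r (j+1)) := by
  rw [molBall_succ j hj]
  ext p
  simp only [mem_union, mem_inter_iff, mem_diff]
  constructor
  · rintro ⟨hx, hq⟩
    by_cases h : p ∈ Qb c r (j+1)
    · exact Or.inl ⟨⟨h, hq⟩, hx⟩
    · exact Or.inr ⟨hx, h⟩
  · rintro (⟨⟨_, hq⟩, hx⟩ | ⟨hx, hq⟩)
    · exact ⟨hx, hq⟩
    · exact ⟨hx, fun hmem => hq (Qb_mono hr (by omega) hmem)⟩

lemma disjoint_molBall_diff (j : ℕ) (hj : 1 ≤ j) :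
    Disjoint (molBall c r (j+1)) (Xset E \ Qb c r (j+1)) := by
  rw [molBall_succ j hj, Set.disjoint_left]
  rintro p ⟨⟨hq, _⟩, _⟩ ⟨_, hq'⟩
  exact hq' hq

lemma X_eq_union : Xset E = Bh c r 1 ∪ (Xset E \ Qb c r 1) := by
  ext p
  simp only [mem_union, mem_inter_iff, mem_diff, Bh]
  constructor
  · intro hx
    by_cases h : p ∈ Qb c r 1
    · exact Or.inl ⟨h, hx⟩
    · exact Or.inr ⟨hx, h⟩
  · rintro (⟨_, hx⟩ | ⟨hx, _⟩) <;> exact hx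

lemma disjoint_Bh_diff : Disjoint (Bh c r 1) (Xset E \ Qb c r 1) := by
  rw [Set.disjoint_left]
  rintro p ⟨hq, _⟩ ⟨_, hq'⟩
  exact hq' hq

lemma not_mem_pball {p : ℝ × E} {ρ : ℝ} : p ∉ pball c ρ ↔ ρ ≤ pdist p c := by
  simp [pball, not_lt]

include hr in
lemma iUnion_molBall (k : ℕ) (hk : 1 ≤ k) :
    (⋃ i : ℕ, molBall c r (k+1+i)) = Xset E \ Qb c r k := by
  ext p
  simp only [mem_iUnion]
  constructor
  · rintro ⟨i, hp⟩
    have h2 : 2 ≤ k + 1 + i := by omega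
    rw [show k+1+i = (k+i) + 1 by omega, molBall_succ _ (by omega)] at hp
    obtain ⟨⟨_, hq⟩, hx⟩ := hp
    exact ⟨hx, fun hmem => hq (Qb_mono hr (by omega) hmem)⟩
  · rintro ⟨hx, hq⟩
    have hex : ∃ i : ℕ, p ∈ Qb c r (k + 1 + i) := by
      obtain ⟨n, hn⟩ := exists_nat_gt (pdist p c / r)
      refine ⟨n + k, ?_⟩
      rw [Qb, pball]
      have h1 : pdist p c < n * r := by
        rw [div_lt_iff₀ hr] at hn; linarith
      have h2 : (n:ℝ) ≤ 2^(k+1+(n+k)+1) := by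
        calc (n:ℝ) ≤ 2^n := by exact_mod_cast (Nat.lt_two_pow_self (n := n)) |>.le
          _ ≤ 2^(k+1+(n+k)+1) := pow_le_pow_right₀ (by norm_num) (by omega)
      simp only [mem_setOf_eq]
      calc pdist p c < n * r := h1
        _ ≤ 2^(k+1+(n+k)+1) * r := mul_le_mul_of_nonneg_right h2 hr.le
    classical
    let i0 := Nat.find hex
    refine ⟨i0, ?_⟩
    rw [show k+1+i0 = (k+i0) + 1 by omega, molBall_succ _ (by omega),
      show k+i0+1 = k+1+i0 by omega]
    refine ⟨⟨Nat.find_spec hex, ?_⟩, hx⟩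
    rcases Nat.eq_zero_or_pos i0 with h0 | h0
    · rw [show k + i0 = k by omega]; exact hq
    · have := Nat.find_min hex (m := i0 - 1) (by omega)
      intro hmem
      exact this (Qb_mono hr (by omega) hmem)

include hr in
lemma pairwise_disjoint_molBall (k : ℕ) :
    Pairwise (Function.onFun Disjoint fun i : ℕ => molBall c r (k+1+i)) := by
  have key : ∀ i j : ℕ, i < j → Disjoint (molBall c r (k+1+i)) (molBall c r (k+1+j)) := by
    intro i j hij
    have h1 : molBall c r (k+1+i) ⊆ pball c (2^(k+1+i+1) * r) := by
      rw [molBall]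
      split
      · refine inter_subset_left.trans (pball_mono ?_)
        have : (4:ℝ) ≤ 2^(k+1+i+1) := by
          calc (4:ℝ) = 2^2 := by norm_num
            _ ≤ 2^(k+1+i+1) := pow_le_pow_right₀ (by norm_num) (by omega)
        exact mul_le_mul_of_nonneg_right this hr.le
      · exact inter_subset_left.trans diff_subset
    have h2 : Disjoint (pball c (2^(k+1+j) * r)) (molBall c r (k+1+j)) := by
      rw [molBall, if_neg (by omega), Set.disjoint_left]
      rintro p hp ⟨⟨_, hq⟩, _⟩
      exact hq hp
    refine Disjoint.mono h1 subset_rfl ?_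
    refine Disjoint.mono_left ?_ h2
    apply pball_mono
    have : (2:ℝ)^(k+1+i+1) ≤ 2^(k+1+j) := pow_le_pow_right₀ (by norm_num) (by omega)
    exact mul_le_mul_of_nonneg_right this hr.le
  intro i j hij
  rcases lt_or_gt_of_ne hij with h | h
  · exact key i j h
  · exact (key j i h).symm

end MolSets

def bump {E : Type*} [MetricSpace E] [MeasurableSpace E] (μ : Measure E)
    (A : Set (ℝ × E)) : ℝ × E → ℝ :=
  A.indicator (fun _ => ((pmeas μ A).toReal)⁻¹)

section Bump
variable {E : Type} [MetricSpace E] [MeasurableSpace E] [BorelSpace E] {μ : Measure E}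
  {A : Set (ℝ × E)} (hA : MeasurableSet A) (h0 : 0 < pmeas μ A) (ht : pmeas μ A < ⊤)

lemma bump_nonneg (p : ℝ × E) : 0 ≤ bump μ A p := by
  rw [bump]
  exact Set.indicator_nonneg (fun _ _ => by positivity) p

lemma bump_support : Function.support (bump μ A) ⊆ A := Set.support_indicator_subset

include hA ht in
lemma bump_integrable : Integrable (bump μ A) (pmeas μ) :=
  (integrableOn_const ht.ne).integrable_indicator hA

include hA h0 ht in
lemma bump_integral : ∫ p, bump μ A p ∂(pmeas μ) = 1 := by
  rw [bump, integral_indicator_const _ hA, smul_eq_mul, measureReal_def,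
    mul_inv_cancel₀ (ENNReal.toReal_ne_zero.2 ⟨h0.ne', ht.ne⟩)]

include hA h0 ht in
lemma bump_eLpNorm_two : eLpNorm (bump μ A) 2 (pmeas μ) = (pmeas μ A) ^ (-(1:ℝ)/2) := by
  rw [bump, eLpNorm_indicator_const hA two_ne_zero ENNReal.ofNat_ne_top]
  have h1 : ‖((pmeas μ A).toReal)⁻¹‖ₑ = (pmeas μ A)⁻¹ := by
    rw [Real.enorm_eq_ofReal (by positivity),
      ENNReal.ofReal_inv_of_pos (ENNReal.toReal_pos h0.ne' ht.ne),
      ENNReal.ofReal_toReal ht.ne]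
  rw [h1, ← ENNReal.rpow_neg_one (pmeas μ A)]
  rw [← ENNReal.rpow_add _ _ h0.ne' ht.ne]
  norm_num

include hA h0 ht in
lemma bump_eLpNorm_one : eLpNorm (bump μ A) 1 (pmeas μ) = 1 := by
  rw [bump, eLpNorm_indicator_const hA one_ne_zero ENNReal.one_ne_top]
  have h1 : ‖((pmeas μ A).toReal)⁻¹‖ₑ = (pmeas μ A)⁻¹ := by
    rw [Real.enorm_eq_ofReal (by positivity),
      ENNReal.ofReal_inv_of_pos (ENNReal.toReal_pos h0.ne' ht.ne),
      ENNReal.ofReal_toReal ht.ne]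
  rw [h1]
  norm_num
  exact ENNReal.inv_mul_cancel h0.ne' ht.ne

end Bump

section L2L1
variable {E : Type} [MetricSpace E] [MeasurableSpace E] [BorelSpace E] {μ : Measure E}

lemma eLpNorm_one_le_two {f : ℝ × E → ℝ} {A : Set (ℝ × E)}
    (hf : AEStronglyMeasurable f ((pmeas μ).restrict A)) :
    eLpNorm f 1 ((pmeas μ).restrict A) ≤
      eLpNorm f 2 ((pmeas μ).restrict A) * (pmeas μ A) ^ ((1:ℝ)/2) := by
  have := eLpNorm_le_eLpNorm_mul_rpow_measure_univ (p := 1) (q := 2)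
    (μ := (pmeas μ).restrict A) (by norm_num) hf
  rw [Measure.restrict_apply_univ] at this
  convert this using 3
  norm_num

lemma rpow_half_cancel {V : ℝ≥0∞} (h0 : V ≠ 0) (ht : V ≠ ⊤) :
    V ^ (-(1:ℝ)/2) * V ^ ((1:ℝ)/2) = 1 := by
  rw [← ENNReal.rpow_add _ _ h0 ht]
  norm_num

end L2L1

def tauc (α : ℝ) : ℝ := (2:ℝ)^(-α)
def calpha (α : ℝ) : ℝ := tauc α * (1 - tauc α)⁻¹
def Kc (C_D : ℝ) : ℝ := Real.sqrt (8*C_D)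
def lamcoef (α C_D : ℝ) : ℝ := (2 + 2*calpha α) * Kc C_D

lemma tauc_pos (α : ℝ) : 0 < tauc α := Real.rpow_pos_of_pos (by norm_num) _
lemma tauc_lt_one {α : ℝ} (hα : 0 < α) : tauc α < 1 :=
  Real.rpow_lt_one_of_one_lt_of_neg (by norm_num) (by linarith)
lemma calpha_pos {α : ℝ} (hα : 0 < α) : 0 < calpha α := by
  have h1 := tauc_pos α
  have h2 := tauc_lt_one hα
  have : 0 < 1 - tauc α := by linarith
  exact mul_pos h1 (by positivity)
lemma Kc_pos {C_D : ℝ} (hCD : 1 ≤ C_D) : 0 < Kc C_D :=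
  Real.sqrt_pos.2 (by nlinarith)
lemma lamcoef_pos {α C_D : ℝ} (hα : 0 < α) (hCD : 1 ≤ C_D) : 0 < lamcoef α C_D :=
  mul_pos (by nlinarith [calpha_pos hα]) (Kc_pos hCD)

def upart {E : Type} [MetricSpace E] [MeasurableSpace E] (μ : Measure E)
    (m : ℝ × E → ℝ) (c : ℝ × E) (r : ℝ) (j : ℕ) : ℝ × E → ℝ :=
  fun p => (molBall c r j).indicator m p
    - (∫ q in molBall c r j, m q ∂(pmeas μ)) * bump μ (Bh c r j) p
    + (∫ q in Xset E \ Qb c r j, m q ∂(pmeas μ)) *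
        (bump μ (Bh c r (j+1)) p - bump μ (Bh c r j) p)



lemma two_rpow_eq (α : ℝ) (j : ℕ) : (2:ℝ)^(-(j:ℝ)*α) = (tauc α)^j := by
  show (2:ℝ)^(-(j:ℝ)*α) = ((2:ℝ)^(-α))^j
  rw [← Real.rpow_natCast ((2:ℝ)^(-α)) j, ← Real.rpow_mul (by norm_num)]
  congr 1; ring

section Size
variable {E : Type} [MetricSpace E] [MeasurableSpace E] [BorelSpace E] {μ : Measure E}
  {C_D α : ℝ} {m : ℝ × E → ℝ} {c : ℝ × E} {r : ℝ}
  (hd : DoublingWith μ C_D) (hr : 0 < r) (hQX : pball c r ⊆ Xset E)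
  (hm : IntegrableOn m (Xset E) (pmeas μ)) (hsize : MolSize μ α c r m)
  (hα : 0 < α)

include hr hsize in
lemma size_L2 (j : ℕ) (hj : 1 ≤ j) :
    eLpNorm m 2 ((pmeas μ).restrict (molBall c r j)) ≤
      ENNReal.ofReal ((tauc α)^j) * (pmeas μ (Bh c r j)) ^ (-(1:ℝ)/2) := by
  rw [← two_rpow_eq]
  simpa [Bh, Qb] using hsize j hj

include hd hr hQX hm hsize in
lemma Jpart_le (j : ℕ) (hj : 1 ≤ j) :
    ∫ p in molBall c r j, ‖m p‖ ∂(pmeas μ) ≤ (tauc α)^j := by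
  have hint : IntegrableOn m (molBall c r j) (pmeas μ) := hm.mono_set (molBall_subset_X j)
  have hV0 := Bh_pos hd hr hQX (c := c) j
  have hVt := Bh_lt_top hd hr (c := c) j
  have h2 : eLpNorm m 1 ((pmeas μ).restrict (molBall c r j)) ≤
      ENNReal.ofReal ((tauc α)^j) := by
    calc eLpNorm m 1 ((pmeas μ).restrict (molBall c r j))
        ≤ eLpNorm m 2 ((pmeas μ).restrict (molBall c r j)) *
            (pmeas μ (molBall c r j)) ^ ((1:ℝ)/2) :=
          eLpNorm_one_le_two hint.aestronglyMeasurable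
      _ ≤ (ENNReal.ofReal ((tauc α)^j) * (pmeas μ (Bh c r j)) ^ (-(1:ℝ)/2)) *
            (pmeas μ (Bh c r j)) ^ ((1:ℝ)/2) := by
          exact mul_le_mul' (size_L2 hr hsize j hj)
            (ENNReal.rpow_le_rpow (measure_mono (molBall_subset_Bh j hj)) (by norm_num))
      _ = ENNReal.ofReal ((tauc α)^j) *
            ((pmeas μ (Bh c r j)) ^ (-(1:ℝ)/2) * (pmeas μ (Bh c r j)) ^ ((1:ℝ)/2)) := by
          ring
      _ = ENNReal.ofReal ((tauc α)^j) := by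
          rw [rpow_half_cancel hV0.ne' hVt.ne, mul_one]
  have h1 : eLpNorm m 1 ((pmeas μ).restrict (molBall c r j)) =
      ENNReal.ofReal (∫ p in molBall c r j, ‖m p‖ ∂(pmeas μ)) := by
    rw [eLpNorm_one_eq_lintegral_enorm, ofReal_integral_norm_eq_lintegral_enorm hint]
  rw [h1] at h2
  have hq : (0:ℝ) ≤ (tauc α)^j := pow_nonneg (tauc_pos α).le j
  exact (ENNReal.ofReal_le_ofReal_iff hq).1 h2

include hd hr hQX hm hsize in
lemma Ipart_abs_le (j : ℕ) (hj : 1 ≤ j) :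
    |∫ p in molBall c r j, m p ∂(pmeas μ)| ≤ (tauc α)^j := by
  refine le_trans ?_ (Jpart_le hd hr hQX hm hsize j hj)
  simpa [Real.norm_eq_abs] using
    norm_integral_le_integral_norm (μ := (pmeas μ).restrict (molBall c r j)) m

include hd hr hQX hm hsize hα in
lemma tail_norm_le (k : ℕ) (hk : 1 ≤ k) :
    ∫ p in Xset E \ Qb c r k, ‖m p‖ ∂(pmeas μ) ≤
      (tauc α)^(k+1) * (1 - tauc α)⁻¹ := by
  set τ := tauc α with hτ
  have hτ0 : 0 < τ := tauc_pos α
  have hτ1 : τ < 1 := tauc_lt_one hα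
  have hU := iUnion_molBall hr (c := c) k hk
  have hIntU : IntegrableOn (fun p => ‖m p‖) (⋃ i : ℕ, molBall c r (k+1+i)) (pmeas μ) := by
    rw [hU]; exact (hm.mono_set diff_subset).norm
  have hSum : HasSum (fun i : ℕ => ∫ p in molBall c r (k+1+i), ‖m p‖ ∂(pmeas μ))
      (∫ p in Xset E \ Qb c r k, ‖m p‖ ∂(pmeas μ)) := by
    rw [← hU]
    exact hasSum_integral_iUnion (fun i => measurableSet_molBall hr _)
      (pairwise_disjoint_molBall hr k) hIntU
  have hle : ∀ i : ℕ, ∫ p in molBall c r (k+1+i), ‖m p‖ ∂(pmeas μ) ≤ τ^(k+1+i) :=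
    fun i => Jpart_le hd hr hQX hm hsize _ (by omega)
  have hg : Summable (fun i : ℕ => τ^(k+1+i)) := by
    simp_rw [pow_add]
    exact ((summable_geometric_of_lt_one hτ0.le hτ1).mul_left _)
  calc ∫ p in Xset E \ Qb c r k, ‖m p‖ ∂(pmeas μ)
      = ∑' i : ℕ, ∫ p in molBall c r (k+1+i), ‖m p‖ ∂(pmeas μ) := hSum.tsum_eq.symm
    _ ≤ ∑' i : ℕ, τ^(k+1+i) := Summable.tsum_le_tsum hle hSum.summable hg
    _ = τ^(k+1) * (1-τ)⁻¹ := by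
        simp_rw [pow_add τ (k+1)]
        rw [tsum_mul_left, tsum_geometric_of_lt_one hτ0.le hτ1]

include hd hr hQX hm hsize hα in
lemma Nint_abs_le (k : ℕ) (hk : 1 ≤ k) :
    |∫ p in Xset E \ Qb c r k, m p ∂(pmeas μ)| ≤
      (tauc α)^(k+1) * (1 - tauc α)⁻¹ := by
  refine le_trans ?_ (tail_norm_le hd hr hQX hm hsize hα k hk)
  simpa [Real.norm_eq_abs] using
    norm_integral_le_integral_norm (μ := (pmeas μ).restrict (Xset E \ Qb c r k)) m

include hd hr hQX hm hsize hα in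
lemma tail_eLpNorm_le (k : ℕ) (hk : 1 ≤ k) :
    eLpNorm ((Xset E \ Qb c r k).indicator m) 1 (pmeas μ) ≤
      ENNReal.ofReal ((tauc α)^(k+1) * (1 - tauc α)⁻¹) := by
  rw [eLpNorm_indicator_eq_eLpNorm_restrict (measurableSet_Xset.diff (measurableSet_Qb hr k)),
    eLpNorm_one_eq_lintegral_enorm,
    ← ofReal_integral_norm_eq_lintegral_enorm (hm.mono_set diff_subset)]
  exact ENNReal.ofReal_le_ofReal (tail_norm_le hd hr hQX hm hsize hα k hk)

include hr hm in
lemma Nint_rec (k : ℕ) (hk : 1 ≤ k) :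
    ∫ p in Xset E \ Qb c r k, m p ∂(pmeas μ) =
      (∫ p in molBall c r (k+1), m p ∂(pmeas μ)) +
        ∫ p in Xset E \ Qb c r (k+1), m p ∂(pmeas μ) := by
  rw [X_diff_eq hr k hk]
  exact setIntegral_union (disjoint_molBall_diff k hk)
    (measurableSet_Xset.diff (measurableSet_Qb hr (k+1)))
    (hm.mono_set (molBall_subset_X _)) (hm.mono_set diff_subset)

include hr hm in
lemma T_rec :
    ∫ p in Xset E, m p ∂(pmeas μ) =
      (∫ p in molBall c r 1, m p ∂(pmeas μ)) +
        ∫ p in Xset E \ Qb c r 1, m p ∂(pmeas μ) := by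
  nth_rewrite 1 [X_eq_union (c := c) (r := r)]
  rw [molBall_one]
  exact setIntegral_union disjoint_Bh_diff
    (measurableSet_Xset.diff (measurableSet_Qb hr 1))
    (hm.mono_set (Bh_subset_X 1)) (hm.mono_set diff_subset)

end Size

lemma eLpNorm_const_mul {δ : Type*} [MeasurableSpace δ] (ρ : Measure δ) (cc : ℝ)
    (f : δ → ℝ) (p : ℝ≥0∞) :
    eLpNorm (fun x => cc * f x) p ρ = ENNReal.ofReal |cc| * eLpNorm f p ρ := by
  rw [← Real.enorm_eq_ofReal_abs, ← eLpNorm_const_smul cc f p ρ]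
  congr 1

section U
variable {E : Type} [MetricSpace E] [MeasurableSpace E] [BorelSpace E] {μ : Measure E}
  {C_D α : ℝ} {m : ℝ × E → ℝ} {c : ℝ × E} {r : ℝ}
  (hd : DoublingWith μ C_D) (hr : 0 < r) (hQX : pball c r ⊆ Xset E)
  (hm : IntegrableOn m (Xset E) (pmeas μ)) (hsize : MolSize μ α c r m)
  (hα : 0 < α) (hCD : 1 ≤ C_D)

include hr hm in
lemma indicator_integrable (j : ℕ) : Integrable ((molBall c r j).indicator m) (pmeas μ) :=
  (hm.mono_set (molBall_subset_X j)).integrable_indicator (measurableSet_molBall hr j)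

include hd hr in
lemma bump_int (j : ℕ) : Integrable (bump μ (Bh c r j)) (pmeas μ) :=
  bump_integrable (measurableSet_Bh hr j) (Bh_lt_top hd hr j)

include hd hr hQX in
lemma bump_intgr (j : ℕ) : ∫ p, bump μ (Bh c r j) p ∂(pmeas μ) = 1 :=
  bump_integral (measurableSet_Bh hr j) (Bh_pos hd hr hQX j) (Bh_lt_top hd hr j)

include hd hr hQX in
lemma bump_L2 (j : ℕ) :
    eLpNorm (bump μ (Bh c r j)) 2 (pmeas μ) = (pmeas μ (Bh c r j)) ^ (-(1:ℝ)/2) :=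
  bump_eLpNorm_two (measurableSet_Bh hr j) (Bh_pos hd hr hQX j) (Bh_lt_top hd hr j)

include hd hr hm in
lemma upart_integrable (j : ℕ) : Integrable (upart μ m c r j) (pmeas μ) := by
  have h1 := indicator_integrable hr hm (c := c) j
  have h2 := bump_int hd hr (c := c) j
  have h3 := bump_int hd hr (c := c) (j+1)
  exact ((h1.sub (h2.const_mul _)).add ((h3.sub h2).const_mul _))

include hd hr hQX hm in
lemma upart_integral (j : ℕ) : ∫ p, upart μ m c r j p ∂(pmeas μ) = 0 := by
  have h1 := indicator_integrable hr hm (c := c) j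
  have h2 := bump_int hd hr (c := c) j
  have h3 := bump_int hd hr (c := c) (j+1)
  simp only [upart]
  have hF : Integrable (fun p => (molBall c r j).indicator m p -
      (∫ q in molBall c r j, m q ∂(pmeas μ)) * bump μ (Bh c r j) p) (pmeas μ) :=
    h1.sub (h2.const_mul _)
  have hG : Integrable (fun p => (∫ q in Xset E \ Qb c r j, m q ∂(pmeas μ)) *
      (bump μ (Bh c r (j+1)) p - bump μ (Bh c r j) p)) (pmeas μ) :=
    (h3.sub h2).const_mul _
  rw [integral_add hF hG, integral_sub h1 (h2.const_mul _), integral_const_mul,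
    integral_const_mul, integral_sub h3 h2,
    integral_indicator (measurableSet_molBall hr j),
    bump_intgr hd hr hQX, bump_intgr hd hr hQX]
  ring

include hr in
lemma upart_support (j : ℕ) (hj : 1 ≤ j) :
    Function.support (upart μ m c r j) ⊆ Qb c r (j+1) := by
  intro p hp
  by_contra hnot
  apply hp
  have hn1 : p ∉ molBall c r j :=
    fun h => hnot (Qb_mono hr (by omega) (Bh_subset_Qb _ (molBall_subset_Bh j hj h)))
  have hn2 : p ∉ Bh c r j :=
    fun h => hnot (Qb_mono hr (by omega) (Bh_subset_Qb _ h))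
  have hn3 : p ∉ Bh c r (j+1) := fun h => hnot (Bh_subset_Qb _ h)
  rw [upart, bump, bump, Set.indicator_of_notMem hn1, Set.indicator_of_notMem hn2,
    Set.indicator_of_notMem hn3]
  ring

include hd hr hQX hm hsize hα hCD in
lemma upart_eLpNorm (j : ℕ) (hj : 1 ≤ j) :
    eLpNorm (upart μ m c r j) 2 (pmeas μ) ≤
      ENNReal.ofReal (lamcoef α C_D * tauc α ^ j) * (pmeas μ (Qb c r (j+1))) ^ (-(1:ℝ)/2) := by
  have h1 := indicator_integrable hr hm (c := c) j
  have h2 := bump_int hd hr (c := c) j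
  have h3 := bump_int hd hr (c := c) (j+1)
  have hV0 := Bh_pos hd hr hQX (c := c) j
  have hVt := Bh_lt_top hd hr (c := c) j
  have hτ0 := tauc_pos α
  have hτ1 := tauc_lt_one hα
  have hcα := calpha_pos hα
  set V := pmeas μ (Bh c r j) with hV
  -- L2 norms of building blocks
  have e1 : eLpNorm ((molBall c r j).indicator m) 2 (pmeas μ) ≤
      ENNReal.ofReal (tauc α ^ j) * V ^ (-(1:ℝ)/2) := by
    rw [eLpNorm_indicator_eq_eLpNorm_restrict (measurableSet_molBall hr j)]
    exact size_L2 hr hsize j hj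
  have e2 : eLpNorm (bump μ (Bh c r j)) 2 (pmeas μ) = V ^ (-(1:ℝ)/2) := bump_L2 hd hr hQX j
  have e3 : eLpNorm (bump μ (Bh c r (j+1))) 2 (pmeas μ) ≤ V ^ (-(1:ℝ)/2) := by
    rw [bump_L2 hd hr hQX (j+1)]
    have hmono : V ≤ ENNReal.ofReal 1 * pmeas μ (Bh c r (j+1)) := by
      rw [ENNReal.ofReal_one, one_mul]
      exact measure_mono (Bh_mono hr (by omega))
    have := rpow_neg_half_le one_pos hmono (Bh_pos hd hr hQX (j+1)).ne'
      (Bh_lt_top hd hr (j+1)).ne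
    simpa using this
  -- scalar bounds
  have hIa : |∫ q in molBall c r j, m q ∂(pmeas μ)| ≤ tauc α ^ j :=
    Ipart_abs_le hd hr hQX hm hsize j hj
  have hNa : |∫ q in Xset E \ Qb c r j, m q ∂(pmeas μ)| ≤ calpha α * tauc α ^ j := by
    have := Nint_abs_le hd hr hQX hm hsize hα j hj
    calc |∫ q in Xset E \ Qb c r j, m q ∂(pmeas μ)|
        ≤ tauc α ^ (j+1) * (1 - tauc α)⁻¹ := this
      _ = calpha α * tauc α ^ j := by rw [calpha, pow_succ]; ring
  -- part 1
  have hb1 : eLpNorm (fun p => (molBall c r j).indicator m p -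
      (∫ q in molBall c r j, m q ∂(pmeas μ)) * bump μ (Bh c r j) p) 2 (pmeas μ) ≤
      ENNReal.ofReal (2 * tauc α ^ j) * V ^ (-(1:ℝ)/2) := by
    refine le_trans (eLpNorm_sub_le h1.aestronglyMeasurable
      ((h2.const_mul _).aestronglyMeasurable) one_le_two) ?_
    have e2' : eLpNorm (fun p => (∫ q in molBall c r j, m q ∂(pmeas μ)) *
        bump μ (Bh c r j) p) 2 (pmeas μ) ≤ ENNReal.ofReal (tauc α ^ j) * V ^ (-(1:ℝ)/2) := by
      rw [eLpNorm_const_mul, e2]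
      exact mul_le_mul_left (ENNReal.ofReal_le_ofReal hIa) _
    calc eLpNorm ((molBall c r j).indicator m) 2 (pmeas μ) +
          eLpNorm (fun p => (∫ q in molBall c r j, m q ∂(pmeas μ)) *
            bump μ (Bh c r j) p) 2 (pmeas μ)
        ≤ ENNReal.ofReal (tauc α ^ j) * V ^ (-(1:ℝ)/2) +
            ENNReal.ofReal (tauc α ^ j) * V ^ (-(1:ℝ)/2) := add_le_add e1 e2'
      _ = ENNReal.ofReal (2 * tauc α ^ j) * V ^ (-(1:ℝ)/2) := by
          rw [← add_mul, ← ENNReal.ofReal_add (by positivity) (by positivity)]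
          congr 2
          ring
  -- part 2
  have hb2 : eLpNorm (fun p => (∫ q in Xset E \ Qb c r j, m q ∂(pmeas μ)) *
      (bump μ (Bh c r (j+1)) p - bump μ (Bh c r j) p)) 2 (pmeas μ) ≤
      ENNReal.ofReal (2 * calpha α * tauc α ^ j) * V ^ (-(1:ℝ)/2) := by
    rw [eLpNorm_const_mul]
    have hsub : eLpNorm (fun p => bump μ (Bh c r (j+1)) p - bump μ (Bh c r j) p) 2 (pmeas μ) ≤
        2 * V ^ (-(1:ℝ)/2) := by
      refine le_trans (eLpNorm_sub_le h3.aestronglyMeasurable h2.aestronglyMeasurable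
        one_le_two) ?_
      rw [two_mul]
      exact add_le_add e3 e2.le
    calc ENNReal.ofReal |∫ q in Xset E \ Qb c r j, m q ∂(pmeas μ)| *
          eLpNorm (fun p => bump μ (Bh c r (j+1)) p - bump μ (Bh c r j) p) 2 (pmeas μ)
        ≤ ENNReal.ofReal (calpha α * tauc α ^ j) * (2 * V ^ (-(1:ℝ)/2)) := by
          exact mul_le_mul' (ENNReal.ofReal_le_ofReal hNa) hsub
      _ = ENNReal.ofReal (2 * calpha α * tauc α ^ j) * V ^ (-(1:ℝ)/2) := by
          rw [show (2:ℝ≥0∞) = ENNReal.ofReal 2 by simp, ← mul_assoc,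
            ← ENNReal.ofReal_mul (by positivity)]
          rw [mul_assoc]
          congr 2
          ring
  -- combine
  have hadd : eLpNorm (upart μ m c r j) 2 (pmeas μ) ≤
      ENNReal.ofReal (2 * tauc α ^ j) * V ^ (-(1:ℝ)/2) +
        ENNReal.ofReal (2 * calpha α * tauc α ^ j) * V ^ (-(1:ℝ)/2) := by
    refine le_trans (eLpNorm_add_le ?_ ?_ one_le_two) (add_le_add hb1 hb2)
    · exact (h1.sub (h2.const_mul _)).aestronglyMeasurable
    · exact ((h3.sub h2).const_mul _).aestronglyMeasurable
  have hVQ : V ^ (-(1:ℝ)/2) ≤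
      ENNReal.ofReal (Kc C_D) * (pmeas μ (Qb c r (j+1))) ^ (-(1:ℝ)/2) := by
    rw [Kc]
    exact rpow_neg_half_le (by nlinarith) (Qb_succ_le_Bh hd hr hQX j) hV0.ne' hVt.ne
  calc eLpNorm (upart μ m c r j) 2 (pmeas μ)
      ≤ ENNReal.ofReal (2 * tauc α ^ j) * V ^ (-(1:ℝ)/2) +
          ENNReal.ofReal (2 * calpha α * tauc α ^ j) * V ^ (-(1:ℝ)/2) := hadd
    _ = ENNReal.ofReal ((2 + 2 * calpha α) * tauc α ^ j) * V ^ (-(1:ℝ)/2) := by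
        rw [← add_mul, ← ENNReal.ofReal_add (by positivity) (by positivity)]
        congr 2
        ring
    _ ≤ ENNReal.ofReal ((2 + 2 * calpha α) * tauc α ^ j) *
          (ENNReal.ofReal (Kc C_D) * (pmeas μ (Qb c r (j+1))) ^ (-(1:ℝ)/2)) := by
        gcongr
    _ = ENNReal.ofReal (lamcoef α C_D * tauc α ^ j) *
          (pmeas μ (Qb c r (j+1))) ^ (-(1:ℝ)/2) := by
        rw [← mul_assoc, ← ENNReal.ofReal_mul (by positivity), lamcoef]
        congr 2
        ring

end U

section Sum
variable {E : Type} [MetricSpace E] [MeasurableSpace E] [BorelSpace E] {μ : Measure E}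
  {C_D α : ℝ} {m : ℝ × E → ℝ} {c : ℝ × E} {r : ℝ}
  (hd : DoublingWith μ C_D) (hr : 0 < r) (hQX : pball c r ⊆ Xset E)
  (hm : IntegrableOn m (Xset E) (pmeas μ))

include hr hm in
lemma sum_upart (K : ℕ) (hK : 1 ≤ K) (p : ℝ × E) :
    (∑ j ∈ Finset.range K, upart μ m c r (j+1) p) =
      (Bh c r K).indicator m p
        - (∫ q in Xset E, m q ∂(pmeas μ)) * bump μ (Bh c r 1) p
        + (∫ q in Xset E \ Qb c r K, m q ∂(pmeas μ)) * bump μ (Bh c r (K+1)) p := by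
  induction K, hK using Nat.le_induction with
  | base =>
    rw [Finset.sum_range_one]
    have hT := T_rec (hr := hr) (hm := hm) (c := c)
    rw [hT]
    simp only [upart, zero_add]
    have hmo : (molBall c r 1).indicator m p = (Bh c r 1).indicator m p := by
      rw [molBall_one]
    rw [hmo]
    ring
  | succ K hK ih =>
    rw [Finset.sum_range_succ, ih]
    have hrec := Nint_rec hr hm (c := c) K hK
    rw [hrec]
    have hind : (Bh c r (K+1)).indicator m p =
        (Bh c r K).indicator m p + (molBall c r (K+1)).indicator m p := by
      rw [Bh_succ_eq hr K hK,
        indicator_union_of_disjoint (disjoint_Bh_molBall K hK) m]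
    rw [hind]
    simp only [upart]
    ring

end Sum













def Cconst (α C_D : ℝ) : ℝ :=
  1 + 2 * Kc C_D * (tauc α + calpha α * tauc α) + lamcoef α C_D * calpha α

lemma Cconst_pos {α C_D : ℝ} (hα : 0 < α) (hCD : 1 ≤ C_D) : 0 < Cconst α C_D := by
  have h1 := tauc_pos α
  have h2 := calpha_pos hα
  have h3 := Kc_pos hCD
  have h4 := lamcoef_pos hα hCD
  have h5 : 0 < lamcoef α C_D * calpha α := mul_pos h4 h2
  have h6 : 0 < 2 * Kc C_D * (tauc α + calpha α * tauc α) := by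
    apply mul_pos (by linarith)
    nlinarith
  rw [Cconst]
  linarith

lemma molecule_main {E : Type} [MetricSpace E] [MeasurableSpace E] [BorelSpace E]
    {μ : Measure E} {C_D α : ℝ} (hCD : 1 ≤ C_D) (hd : DoublingWith μ C_D) (hα : 0 < α)
    {m : ℝ × E → ℝ} {c : ℝ × E} {r : ℝ} (hr : 0 < r)
    (hQX : pball c r ⊆ Xset E) (hm : IntegrableOn m (Xset E) (pmeas μ))
    (hsize : MolSize μ α c r m) (w : ℝ × E → ℝ)
    (hw_int : Integrable w (pmeas μ))
    (hw_integral : (∫ p, w p ∂(pmeas μ)) = 1)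
    (hw_supp : Function.support w ⊆ Qb c r 2)
    (hw_L2 : eLpNorm w 2 (pmeas μ) ≤
      ENNReal.ofReal (Kc C_D) * (pmeas μ (Qb c r 2)) ^ (-(1:ℝ)/2))
    (hw_X : ∀ p ∈ Xset E, (∫ q in Xset E, m q ∂(pmeas μ)) = 0 ∨ w p = 0) :
    MemH1r μ m ∧ H1rnorm μ m ≤ Cconst α C_D := by
  classical
  have hτ0 := tauc_pos α
  have hτ1 := tauc_lt_one hα
  have hcα := calpha_pos hα
  have hKc := Kc_pos hCD
  have hlamc := lamcoef_pos hα hCD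
  set T := ∫ q in Xset E, m q ∂(pmeas μ) with hT
  -- bound for |T|
  have hTabs : |T| ≤ tauc α + calpha α * tauc α := by
    rw [hT, T_rec hr hm (c := c)]
    have h1 := Ipart_abs_le hd hr hQX hm hsize 1 le_rfl
    have h2 := Nint_abs_le hd hr hQX hm hsize hα 1 le_rfl
    refine le_trans (abs_add_le _ _) ?_
    have e1 : tauc α ^ 1 = tauc α := pow_one _
    have e2 : tauc α ^ (1+1) * (1 - tauc α)⁻¹ = calpha α * tauc α := by
      rw [calpha]; ring
    rw [e1] at h1
    rw [e2] at h2
    linarith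
  set lam0 := 2 * Kc C_D * (tauc α + calpha α * tauc α) with hlam0
  have hlam0pos : 0 < lam0 := by
    apply mul_pos (by linarith)
    nlinarith
  set lam : ℕ → ℝ := fun i => if i = 0 then lam0 else lamcoef α C_D * tauc α ^ i
    with hlamdef
  set a : ℕ → ℝ × E → ℝ := fun i => if i = 0 then
      fun p => (lam0⁻¹ * T) * (bump μ (Bh c r 1) p - w p)
    else fun p => (lamcoef α C_D * tauc α ^ i)⁻¹ * upart μ m c r i p with hadef
  set F : ℝ × E → ℝ := fun p => (Xset E).indicator m p - T * w p with hFdef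
  have hlam0' : lam 0 = lam0 := rfl
  have hlamn : ∀ i : ℕ, lam (i+1) = lamcoef α C_D * tauc α ^ (i+1) := fun _ => rfl
  have ha0 : a 0 = fun p => (lam0⁻¹ * T) * (bump μ (Bh c r 1) p - w p) := rfl
  have han : ∀ i : ℕ, a (i+1) =
      fun p => (lamcoef α C_D * tauc α ^ (i+1))⁻¹ * upart μ m c r (i+1) p := fun _ => rfl
  -- L2 bound for bump 1 against Qb 2
  have hbump1_L2 : eLpNorm (bump μ (Bh c r 1)) 2 (pmeas μ) ≤
      ENNReal.ofReal (Kc C_D) * (pmeas μ (Qb c r 2)) ^ (-(1:ℝ)/2) := by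
    rw [bump_L2 hd hr hQX 1, Kc]
    exact rpow_neg_half_le (by nlinarith) (Qb_succ_le_Bh hd hr hQX 1)
      (Bh_pos hd hr hQX 1).ne' (Bh_lt_top hd hr 1).ne
  -- all atoms
  have hatom : ∀ i, IsAtom12 μ (a i) := by
    intro i
    rcases Nat.eq_zero_or_pos i with rfl | hi
    · refine ⟨c, 2^(2+1)*r, by positivity, ?_, ?_, ?_, ?_⟩
      · intro p hp
        have hp' : (lam0⁻¹ * T) * (bump μ (Bh c r 1) p - w p) ≠ 0 := hp
        have hne : bump μ (Bh c r 1) p - w p ≠ 0 := by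
          intro h; exact hp' (by rw [h, mul_zero])
        have : bump μ (Bh c r 1) p ≠ 0 ∨ w p ≠ 0 := by
          by_contra hcon
          push_neg at hcon
          rw [hcon.1, hcon.2, sub_zero] at hne
          exact hne rfl
        have hQ2 : p ∈ Qb c r 2 := by
          rcases this with h | h
          · exact Qb_mono hr (by omega) (Bh_subset_Qb 1 (bump_support h))
          · exact hw_supp h
        exact hQ2
      · rw [ha0]
        exact ((bump_int hd hr 1).sub hw_int).const_mul _
      · rw [ha0]
        rw [integral_const_mul, integral_sub (bump_int hd hr 1) hw_int,
          bump_intgr hd hr hQX 1, hw_integral, sub_self, mul_zero]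
      · rw [ha0]
        rw [eLpNorm_const_mul]
        have hdiff : eLpNorm (fun p => bump μ (Bh c r 1) p - w p) 2 (pmeas μ) ≤
            ENNReal.ofReal (2 * Kc C_D) * (pmeas μ (Qb c r 2)) ^ (-(1:ℝ)/2) := by
          refine le_trans (eLpNorm_sub_le (bump_int hd hr 1).aestronglyMeasurable
            hw_int.aestronglyMeasurable one_le_two) ?_
          calc eLpNorm (bump μ (Bh c r 1)) 2 (pmeas μ) + eLpNorm w 2 (pmeas μ)
              ≤ ENNReal.ofReal (Kc C_D) * (pmeas μ (Qb c r 2)) ^ (-(1:ℝ)/2) +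
                ENNReal.ofReal (Kc C_D) * (pmeas μ (Qb c r 2)) ^ (-(1:ℝ)/2) :=
                add_le_add hbump1_L2 hw_L2
            _ = ENNReal.ofReal (2 * Kc C_D) * (pmeas μ (Qb c r 2)) ^ (-(1:ℝ)/2) := by
                rw [← add_mul, ← ENNReal.ofReal_add hKc.le hKc.le]
                congr 2
                ring
        calc ENNReal.ofReal |lam0⁻¹ * T| *
              eLpNorm (fun p => bump μ (Bh c r 1) p - w p) 2 (pmeas μ)
            ≤ ENNReal.ofReal |lam0⁻¹ * T| *
              (ENNReal.ofReal (2 * Kc C_D) * (pmeas μ (Qb c r 2)) ^ (-(1:ℝ)/2)) :=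
              mul_le_mul_right hdiff _
          _ = ENNReal.ofReal (|lam0⁻¹ * T| * (2 * Kc C_D)) *
              (pmeas μ (Qb c r 2)) ^ (-(1:ℝ)/2) := by
              rw [← mul_assoc, ← ENNReal.ofReal_mul (abs_nonneg _)]
          _ ≤ (pmeas μ (Qb c r 2)) ^ (-(1:ℝ)/2) := by
              apply mul_le_of_le_one_left (by simp)
              rw [ENNReal.ofReal_le_one]
              rw [abs_mul, abs_inv, abs_of_pos hlam0pos, inv_mul_eq_div,
                div_mul_eq_mul_div, div_le_one hlam0pos, hlam0]
              nlinarith [abs_nonneg T]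
    · obtain ⟨i', rfl⟩ : ∃ i', i = i' + 1 := ⟨i - 1, by omega⟩
      have hpos : (0:ℝ) < lamcoef α C_D * tauc α ^ (i'+1) :=
        mul_pos hlamc (pow_pos hτ0 _)
      refine ⟨c, 2^(i'+1+1+1)*r, by positivity, ?_, ?_, ?_, ?_⟩
      · intro p hp
        have hp' : (lamcoef α C_D * tauc α ^ (i'+1))⁻¹ * upart μ m c r (i'+1) p ≠ 0 := hp
        have hne : upart μ m c r (i'+1) p ≠ 0 := by
          intro h; exact hp' (by rw [h, mul_zero])
        exact upart_support hr (i'+1) (by omega) hne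
      · rw [han i']
        exact (upart_integrable hd hr hm (i'+1)).const_mul _
      · rw [han i']
        rw [integral_const_mul, upart_integral hd hr hQX hm (i'+1), mul_zero]
      · rw [han i']
        rw [eLpNorm_const_mul]
        refine le_trans (mul_le_mul_right
          (upart_eLpNorm hd hr hQX hm hsize hα hCD (i'+1) (by omega)) _) ?_
        rw [← mul_assoc, ← ENNReal.ofReal_mul (abs_nonneg _)]
        have hone : |(lamcoef α C_D * tauc α ^ (i'+1))⁻¹| * (lamcoef α C_D * tauc α ^ (i'+1)) = 1 := by
          rw [abs_inv, abs_of_pos hpos]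
          exact inv_mul_cancel₀ hpos.ne'
        rw [hone, ENNReal.ofReal_one, one_mul]
        exact le_rfl
  -- summability
  have hshift : (fun n : ℕ => |lam (n+1)|) =
      fun n => (lamcoef α C_D * tauc α) * tauc α ^ n := by
    funext n
    rw [hlamn n, abs_of_pos (mul_pos hlamc (pow_pos hτ0 _)), pow_succ]
    ring
  have hsum : Summable (fun i => |lam i|) := by
    refine (summable_nat_add_iff 1).1 ?_
    rw [hshift]
    exact (summable_geometric_of_lt_one hτ0.le hτ1).mul_left _
  have htsum : (∑' i, |lam i|) ≤ Cconst α C_D := by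
    rw [Summable.tsum_eq_zero_add hsum]
    have h0 : |lam 0| = lam0 := by
      rw [hlam0']; exact abs_of_pos hlam0pos
    rw [h0, hshift, tsum_mul_left, tsum_geometric_of_lt_one hτ0.le hτ1]
    have he : lamcoef α C_D * tauc α * (1 - tauc α)⁻¹ = lamcoef α C_D * calpha α := by
      rw [calpha]; ring
    rw [he, Cconst, hlam0]
    linarith
  -- pointwise partial sums
  have hpt : ∀ (K : ℕ) (p : ℝ × E),
      F p - (∑ i ∈ Finset.range (K+2), lam i * a i p) =
      (Xset E \ Qb c r (K+1)).indicator m p -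
        (∫ q in Xset E \ Qb c r (K+1), m q ∂(pmeas μ)) * bump μ (Bh c r (K+2)) p := by
    intro K p
    rw [Finset.sum_range_succ' (fun i => lam i * a i p) (K+1)]
    have hterm0 : lam 0 * a 0 p = T * (bump μ (Bh c r 1) p - w p) := by
      rw [hlam0', ha0]
      rw [← mul_assoc, ← mul_assoc, mul_inv_cancel₀ hlam0pos.ne', one_mul]
    have hterms : ∀ j ∈ Finset.range (K+1), lam (j+1) * a (j+1) p =
        upart μ m c r (j+1) p := by
      intro j _
      rw [hlamn j, han j]
      rw [← mul_assoc, mul_inv_cancel₀ (mul_pos hlamc (pow_pos hτ0 _)).ne', one_mul]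
    rw [Finset.sum_congr rfl hterms, sum_upart hr hm (K+1) (by omega) p, hterm0]
    have hdiff : (Xset E \ Qb c r (K+1)).indicator m p =
        (Xset E).indicator m p - (Bh c r (K+1)).indicator m p := by
      have hsub : Bh c r (K+1) ⊆ Xset E := Bh_subset_X _
      have hset : Xset E \ Qb c r (K+1) = Xset E \ Bh c r (K+1) := by
        rw [Bh]
        ext q
        simp only [mem_diff, mem_inter_iff]
        tauto
      rw [hset, Set.indicator_sdiff hsub m, Pi.sub_apply]
    rw [hFdef]
    simp only []
    rw [hdiff]
    ring
  -- L1 bound on tails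
  have hL1bound : ∀ K : ℕ,
      eLpNorm (fun p => F p - ∑ i ∈ Finset.range (K+2), lam i * a i p) 1 (pmeas μ) ≤
      ENNReal.ofReal (2 * calpha α * tauc α ^ (K+1)) := by
    intro K
    have heq : (fun p => F p - ∑ i ∈ Finset.range (K+2), lam i * a i p) =
        fun p => (Xset E \ Qb c r (K+1)).indicator m p -
          (∫ q in Xset E \ Qb c r (K+1), m q ∂(pmeas μ)) * bump μ (Bh c r (K+2)) p := by
      funext p
      exact hpt K p
    rw [heq]
    have hi1 : Integrable ((Xset E \ Qb c r (K+1)).indicator m) (pmeas μ) :=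
      (hm.mono_set diff_subset).integrable_indicator
        (measurableSet_Xset.diff (measurableSet_Qb hr _))
    have hi2 : Integrable (fun p => (∫ q in Xset E \ Qb c r (K+1), m q ∂(pmeas μ)) *
        bump μ (Bh c r (K+2)) p) (pmeas μ) := (bump_int hd hr _).const_mul _
    refine le_trans (eLpNorm_sub_le hi1.aestronglyMeasurable hi2.aestronglyMeasurable
      le_rfl) ?_
    have hta : eLpNorm ((Xset E \ Qb c r (K+1)).indicator m) 1 (pmeas μ) ≤
        ENNReal.ofReal (calpha α * tauc α ^ (K+1)) := by
      refine le_trans (tail_eLpNorm_le hd hr hQX hm hsize hα (K+1) (by omega)) ?_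
      apply ENNReal.ofReal_le_ofReal
      rw [calpha]
      rw [show (K+1+1) = (K+1)+1 from rfl, pow_succ]
      ring_nf
      exact le_refl _
    have htb : eLpNorm (fun p => (∫ q in Xset E \ Qb c r (K+1), m q ∂(pmeas μ)) *
        bump μ (Bh c r (K+2)) p) 1 (pmeas μ) ≤
        ENNReal.ofReal (calpha α * tauc α ^ (K+1)) := by
      rw [eLpNorm_const_mul,
        bump_eLpNorm_one (measurableSet_Bh hr _) (Bh_pos hd hr hQX _) (Bh_lt_top hd hr _),
        mul_one]
      apply ENNReal.ofReal_le_ofReal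
      have := Nint_abs_le hd hr hQX hm hsize hα (K+1) (by omega)
      calc |∫ q in Xset E \ Qb c r (K+1), m q ∂(pmeas μ)|
          ≤ tauc α ^ (K+1+1) * (1 - tauc α)⁻¹ := this
        _ = calpha α * tauc α ^ (K+1) := by rw [calpha, pow_succ]; ring
    calc eLpNorm ((Xset E \ Qb c r (K+1)).indicator m) 1 (pmeas μ) +
          eLpNorm (fun p => (∫ q in Xset E \ Qb c r (K+1), m q ∂(pmeas μ)) *
            bump μ (Bh c r (K+2)) p) 1 (pmeas μ)
        ≤ ENNReal.ofReal (calpha α * tauc α ^ (K+1)) +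
            ENNReal.ofReal (calpha α * tauc α ^ (K+1)) := add_le_add hta htb
      _ = ENNReal.ofReal (2 * calpha α * tauc α ^ (K+1)) := by
          rw [← ENNReal.ofReal_add (by positivity) (by positivity)]
          congr 1
          ring
  -- convergence
  have htend : Tendsto (fun k => eLpNorm
      (fun p => F p - ∑ i ∈ Finset.range k, lam i * a i p) 1 (pmeas μ)) atTop (nhds 0) := by
    have hreal : Tendsto (fun k : ℕ => 2 * calpha α * tauc α ^ (k-1)) atTop (nhds 0) := by
      have h1 := (tendsto_pow_atTop_nhds_zero_of_lt_one hτ0.le hτ1).comp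
        (tendsto_sub_atTop_nat 1)
      have h2 := h1.const_mul (2 * calpha α)
      simpa using h2
    have hgt : Tendsto (fun k : ℕ => ENNReal.ofReal (2 * calpha α * tauc α ^ (k-1)))
        atTop (nhds 0) := by
      have := ENNReal.tendsto_ofReal hreal
      simpa using this
    refine tendsto_of_tendsto_of_tendsto_of_le_of_le' tendsto_const_nhds hgt
      (Eventually.of_forall fun _ => by simp) ?_
    filter_upwards [eventually_ge_atTop 2] with k hk
    obtain ⟨K, rfl⟩ : ∃ K, k = K + 2 := ⟨k - 2, by omega⟩
    exact hL1bound K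
  have hFint : Integrable F (pmeas μ) :=
    (hm.integrable_indicator measurableSet_Xset).sub (hw_int.const_mul T)
  have hmem : MemH1 μ F := ⟨hFint, lam, a, hatom, ⟨hsum, htend⟩⟩
  have haeeq : F =ᵐ[(pmeas μ).restrict (Xset E)] m := by
    filter_upwards [ae_restrict_mem measurableSet_Xset] with p hp
    rw [hFdef]
    simp only []
    rw [Set.indicator_of_mem hp]
    rcases hw_X p hp with h | h
    · rw [h]
      ring
    · rw [h]
      ring
  refine ⟨⟨hm, F, hmem, haeeq⟩, ?_⟩
  have hbdd0 : ∀ x ∈ {cc | ∃ (lam' : ℕ → ℝ) (a' : ℕ → ℝ × E → ℝ),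
      (∀ i, IsAtom12 μ (a' i)) ∧ HasL1Decomp (pmeas μ) F lam' a' ∧
        cc = ∑' i, |lam' i|}, (0:ℝ) ≤ x := by
    rintro x ⟨lam', a', _, _, rfl⟩
    exact tsum_nonneg fun i => abs_nonneg _
  have hH1 : H1norm μ F ≤ ∑' i, |lam i| := by
    apply csInf_le ⟨0, hbdd0⟩
    exact ⟨lam, a, hatom, ⟨hsum, htend⟩, rfl⟩
  have hH1r : H1rnorm μ m ≤ H1norm μ F := by
    apply csInf_le
    · refine ⟨0, ?_⟩
      rintro x ⟨F', hF', _, rfl⟩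
      apply Real.sInf_nonneg
      rintro y ⟨lam', a', _, _, rfl⟩
      exact tsum_nonneg fun i => abs_nonneg _
    · exact ⟨F, hmem, haeeq, rfl⟩
  linarith [le_trans hH1 htsum]

end MoleculeAux

/-- type (a) and type (b) molecules form a bounded subset of `H¹_r(X)`:
for every `α > 0` there is `C`, depending only on `α` and `C_D`, such that every type (a)
molecule and every type (b) molecule with parameter `α` lies in `H¹_r(X)` with norm `≤ C`. -/
theorem stmt7 (α : ℝ) (hα : 0 < α) (C_D : ℝ) (hCD : 1 ≤ C_D) :
    ∃ C : ℝ, 0 < C ∧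
      ∀ (E : Type) (_ : MetricSpace E) (_ : MeasurableSpace E), BorelSpace E →
        ∀ μ : Measure E, DoublingWith μ C_D →
          ∀ (m : ℝ × E → ℝ) (c : ℝ × E) (r : ℝ),
            (IsTypeAMolecule μ α c r m ∨ IsTypeBMolecule μ α c r m) →
            MemH1r μ m ∧ H1rnorm μ m ≤ C := by
  refine ⟨Cconst α C_D, Cconst_pos hα hCD, ?_⟩
  intro E iME iMS iBS μ hd m c r hmol
  haveI := iBS
  have hKc := Kc_pos hCD
  have h8CD : (0:ℝ) < 8 * C_D := by nlinarith
  rcases hmol with hA | hB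
  · obtain ⟨hr, hQ1, _, hm, hcancel, hsize⟩ := hA
    refine molecule_main hCD hd hα hr hQ1 hm hsize (bump μ (Bh c r 1))
      (bump_int hd hr 1) (bump_intgr hd hr hQ1 1)
      (bump_support.trans ((Bh_subset_Qb 1).trans (Qb_mono hr (by omega)))) ?_
      (fun p _ => Or.inl hcancel)
    rw [bump_L2 hd hr hQ1 1, Kc]
    exact rpow_neg_half_le h8CD (Qb_succ_le_Bh hd hr hQ1 1)
      (Bh_pos hd hr hQ1 1).ne' (Bh_lt_top hd hr 1).ne
  · obtain ⟨hr, hQ1, _, hnot4, hm, hsize⟩ := hB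
    haveI := hd.sigmaFinite c.2
    have hc1 : r^2 ≤ c.1 := center_time_ge hr hQ1
    have hc16 : c.1 < 16 * r^2 := by
      obtain ⟨p, hp, hpX⟩ := Set.not_subset.1 hnot4
      rw [mem_pball (by positivity)] at hp
      have hp1 : p.1 ≤ 0 := le_of_not_gt hpX
      nlinarith [hp.1.1]
    set S : Set (ℝ × E) := Ioo (c.1 - (2^(2+1)*r)^2) 0 ×ˢ ball c.2 (2^(2+1)*r) with hSdef
    have hSmeas : MeasurableSet S := measurableSet_Ioo.prod measurableSet_ball
    have hball := hd.1 c.2 (2^(2+1)*r) (by positivity)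
    have hSval : pmeas μ S = ENNReal.ofReal (0 - (c.1 - (2^(2+1)*r)^2)) *
        μ (ball c.2 (2^(2+1)*r)) := by
      rw [hSdef, pmeas, Measure.prod_prod, Real.volume_Ioo]
    have h64 : ((2:ℝ)^(2+1)*r)^2 = 64*r^2 := by rw [mul_pow]; norm_num
    have hX : 48*r^2 ≤ 0 - (c.1 - (2^(2+1)*r)^2) := by nlinarith [mul_pos hr hr]
    have hrr : (0:ℝ) < 0 - (c.1 - (2^(2+1)*r)^2) :=
      lt_of_lt_of_le (by positivity) hX
    have hS0 : 0 < pmeas μ S := by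
      rw [hSval]
      exact ENNReal.mul_pos (ENNReal.ofReal_pos.2 hrr).ne' hball.1.ne'
    have hSfin : pmeas μ S < ⊤ := by
      rw [hSval]
      exact ENNReal.mul_lt_top ENNReal.ofReal_lt_top hball.2
    have hSQ2 : S ⊆ Qb c r 2 := by
      rw [hSdef, Qb, pball_eq (by positivity : (0:ℝ) < 2^(2+1)*r)]
      refine Set.prod_mono (Ioo_subset_Ioo le_rfl ?_) subset_rfl
      nlinarith
    have hQ2S : pmeas μ (Qb c r 2) ≤ ENNReal.ofReal (8*C_D) * pmeas μ S := by
      rw [Qb, pmeas_pball (by positivity : (0:ℝ) < 2^(2+1)*r), hSval,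
        ← mul_assoc, ← ENNReal.ofReal_mul (by nlinarith)]
      refine mul_le_mul' (ENNReal.ofReal_le_ofReal ?_) le_rfl
      nlinarith [hX, h64, mul_le_mul_of_nonneg_right (show (8:ℝ) ≤ 8*C_D by linarith)
        (le_trans (by positivity : (0:ℝ) ≤ 48*r^2) hX)]
    refine molecule_main hCD hd hα hr hQ1 hm hsize (bump μ S)
      (bump_integrable hSmeas hSfin) (bump_integral hSmeas hS0 hSfin)
      (bump_support.trans hSQ2) ?_ ?_
    · rw [bump_eLpNorm_two hSmeas hS0 hSfin, Kc]
      exact rpow_neg_half_le h8CD hQ2S hS0.ne' hSfin.ne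
    · intro p hp
      refine Or.inr ?_
      rw [bump, hSdef]
      apply Set.indicator_of_notMem
      intro hmem
      have : p.1 < 0 := hmem.1.2
      have : 0 < p.1 := hp
      linarith
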